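/- arXiv:1008.0262 — 7 statements merged into one kernel-verified Lean document; each statement's English description precedes it below -/
import Mathlib

section
/- Let V, W, X be real normed vector spaces, and let j : V → W and i : W → X be continuous linear maps (playing the role of the continuous embeddings V ↪ W ↪ X). Let ε ∈ [0,1) and M > 0 be such that the interpolation inequality ‖j f‖_W ≤ M · ‖f‖_V^ε · ‖i(j f)‖_X^{1−ε} holds for all f ∈ V. Let E₀, E₁ : V → ℝ and let α > 0 and ω, k, β ≥ 0 be constants such that E₀(f) + ω‖i(j f)‖_X^2 ≥ α‖f‖_V^2 and E₁(f) ≥ −k‖j f‖_W^2 − β for all f ∈ V. Then there exist α' > 0 and ω' ≥ 0 such that E₀(f) + E₁(f) ≥ α'‖f‖_V^2 − ω'‖i(j f)‖_X^2 − β for all f ∈ V. -/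
open Real

lemma young_aux {ε : ℝ} (hε0 : 0 < ε) (hε1 : ε < 1) {a b l : ℝ} (ha : 0 ≤ a) (hb : 0 ≤ b)
    (hl : 0 < l) :
    a ^ ε * b ^ (1 - ε) ≤ ε * (l * a) + (1 - ε) * (l ^ (-ε / (1 - ε)) * b) := by
  have h1ε : (0:ℝ) < 1 - ε := by linarith
  have key := Real.geom_mean_le_arith_mean2_weighted (p₁ := l * a)
    (p₂ := l ^ (-ε / (1 - ε)) * b) hε0.le h1ε.le
    (mul_nonneg hl.le ha) (mul_nonneg (Real.rpow_nonneg hl.le _) hb) (by ring)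
  have e1 : (l * a) ^ ε = l ^ ε * a ^ ε := Real.mul_rpow hl.le ha
  have e2 : (l ^ (-ε / (1 - ε)) * b) ^ (1 - ε) = l ^ (-ε) * b ^ (1 - ε) := by
    rw [Real.mul_rpow (Real.rpow_nonneg hl.le _) hb, ← Real.rpow_mul hl.le,
      div_mul_cancel₀ _ h1ε.ne']
  rw [e1, e2] at key
  calc a ^ ε * b ^ (1 - ε) = l ^ ε * a ^ ε * (l ^ (-ε) * b ^ (1 - ε)) := by
        rw [show l ^ ε * a ^ ε * (l ^ (-ε) * b ^ (1 - ε))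
            = (l ^ ε * l ^ (-ε)) * (a ^ ε * b ^ (1 - ε)) by ring,
          ← Real.rpow_add hl, add_neg_cancel, Real.rpow_zero, one_mul]
    _ ≤ _ := key

/-- Quantitative ellipticity of a perturbed functional: if
`E₀ f + ω * ‖i (j f)‖ ^ 2 ≥ α * ‖f‖ ^ 2` and `E₁ f ≥ -k * ‖j f‖ ^ 2 - β`, with the
interpolation inequality `‖j f‖ ≤ M * ‖f‖ ^ ε * ‖i (j f)‖ ^ (1 - ε)` for some
`ε ∈ [0, 1)`, then `E₀ + E₁` has a lower bound
`E₀ f + E₁ f ≥ α' * ‖f‖ ^ 2 - ω' * ‖i (j f)‖ ^ 2 - β` with `α' > 0` and `ω' ≥ 0`. -/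
theorem elliptic_perturbation_lower_bound
    {V W X : Type*} [NormedAddCommGroup V] [NormedSpace ℝ V]
    [NormedAddCommGroup W] [NormedSpace ℝ W]
    [NormedAddCommGroup X] [NormedSpace ℝ X]
    (j : V →L[ℝ] W) (i : W →L[ℝ] X)
    (ε M : ℝ) (hε : ε ∈ Set.Ico (0 : ℝ) 1) (hM : 0 < M)
    (hinterp : ∀ f : V, ‖j f‖ ≤ M * ‖f‖ ^ ε * ‖i (j f)‖ ^ (1 - ε))
    (E₀ E₁ : V → ℝ) (α ω k β : ℝ)
    (hα : 0 < α) (hω : 0 ≤ ω) (hk : 0 ≤ k) (hβ : 0 ≤ β)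
    (hE₀ : ∀ f : V, α * ‖f‖ ^ 2 ≤ E₀ f + ω * ‖i (j f)‖ ^ 2)
    (hE₁ : ∀ f : V, -k * ‖j f‖ ^ 2 - β ≤ E₁ f) :
    ∃ α' > (0 : ℝ), ∃ ω' ≥ (0 : ℝ),
      ∀ f : V, α' * ‖f‖ ^ 2 - ω' * ‖i (j f)‖ ^ 2 - β ≤ E₀ f + E₁ f := by
  obtain ⟨hε0, hε1⟩ := hε
  -- squared interpolation inequality
  have hsq : ∀ f : V, ‖j f‖ ^ 2 ≤ M ^ 2 * (‖f‖ ^ 2) ^ ε * (‖i (j f)‖ ^ 2) ^ (1 - ε) := by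
    intro f
    have h := hinterp f
    have hnn : (0:ℝ) ≤ M * ‖f‖ ^ ε * ‖i (j f)‖ ^ (1 - ε) :=
      mul_nonneg (mul_nonneg hM.le (Real.rpow_nonneg (norm_nonneg _) _))
        (Real.rpow_nonneg (norm_nonneg _) _)
    have h2 : ‖j f‖ ^ 2 ≤ (M * ‖f‖ ^ ε * ‖i (j f)‖ ^ (1 - ε)) ^ 2 := by
      have := mul_le_mul h h (norm_nonneg _) hnn
      calc ‖j f‖ ^ 2 = ‖j f‖ * ‖j f‖ := sq ‖j f‖
        _ ≤ _ := this
        _ = _ := (sq _).symm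
    refine h2.trans_eq ?_
    rw [mul_pow, mul_pow, ← Real.rpow_natCast (‖f‖ ^ ε), ← Real.rpow_natCast (‖i (j f)‖ ^ (1-ε)),
      ← Real.rpow_mul (norm_nonneg _), ← Real.rpow_mul (norm_nonneg _),
      ← Real.rpow_natCast ‖f‖ 2, ← Real.rpow_natCast ‖i (j f)‖ 2,
      ← Real.rpow_mul (norm_nonneg _), ← Real.rpow_mul (norm_nonneg _)]
    norm_num
    ring_nf
  rcases eq_or_lt_of_le hk with hk0 | hkpos
  · refine ⟨α, hα, ω, hω, fun f => ?_⟩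
    have h1 := hE₀ f
    have h2 := hE₁ f
    rw [← hk0] at h2
    simp only [neg_zero, zero_mul] at h2
    linarith
  rcases eq_or_lt_of_le hε0 with hε0' | hεpos
  · -- ε = 0
    refine ⟨α, hα, ω + k * M ^ 2, by positivity, fun f => ?_⟩
    have h1 := hE₀ f
    have h2 := hE₁ f
    have h3 := hsq f
    rw [← hε0'] at h3
    simp only [Real.rpow_zero, sub_zero, Real.rpow_one, mul_one] at h3
    nlinarith [sq_nonneg (‖i (j f)‖)]
  · -- ε > 0
    set l : ℝ := α / (2 * (k * M ^ 2) * ε) with hl_def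
    have hC : 0 < k * M ^ 2 := by positivity
    have hl : 0 < l := by positivity
    have hω' : (0:ℝ) ≤ ω + k * M ^ 2 * (1 - ε) * l ^ (-ε / (1 - ε)) := by
      have : (0:ℝ) ≤ k * M ^ 2 * (1 - ε) * l ^ (-ε / (1 - ε)) :=
        mul_nonneg (mul_nonneg hC.le (by linarith)) (Real.rpow_nonneg hl.le _)
      linarith
    refine ⟨α / 2, by positivity, ω + k * M ^ 2 * (1 - ε) * l ^ (-ε / (1 - ε)),
      hω', fun f => ?_⟩
    have h1 := hE₀ f
    have h2 := hE₁ f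
    have h3 := hsq f
    have h4 := young_aux hεpos hε1 (sq_nonneg ‖f‖) (sq_nonneg ‖i (j f)‖) hl
    have hA := mul_le_mul_of_nonneg_left h3 hk
    have hB := mul_le_mul_of_nonneg_left h4 hC.le
    have h5 : k * ‖j f‖ ^ 2 ≤ k * M ^ 2 *
        (ε * (l * ‖f‖ ^ 2) + (1 - ε) * (l ^ (-ε / (1 - ε)) * ‖i (j f)‖ ^ 2)) := by
      nlinarith [hA, hB]
    have hle : k * M ^ 2 * ε * l = α / 2 := by
      rw [hl_def]; field_simp
    have h6 : k * M ^ 2 * (ε * (l * ‖f‖ ^ 2)) = (α / 2) * ‖f‖ ^ 2 := by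
      rw [← hle]; ring
    nlinarith [h5]
end

section
/- Let V, W, X be real normed vector spaces, and let j : V → W and i : W → X be continuous linear maps. Let ε ∈ [0,1) and M > 0 be such that ‖j f‖_W ≤ M · ‖f‖_V^ε · ‖i(j f)‖_X^{1−ε} for all f ∈ V. Let E₀, E₁ : V → ℝ and let α > 0 and ω, k, β ≥ 0 be constants such that E₀(f) + ω‖i(j f)‖_X^2 ≥ α‖f‖_V^2 and E₁(f) ≥ −k‖j f‖_W^2 − β for all f ∈ V. Assume moreover that the function f ↦ E₀(f) + ω‖i(j f)‖_X^2 is convex on V and that E₁ is convex on V. Then there exists ω' ≥ 0 such that the function f ↦ E₀(f) + E₁(f) + ω'‖i(j f)‖_X^2 is convex on V and coercive, i.e. every sublevel set {f ∈ V : E₀(f) + E₁(f) + ω'‖i(j f)‖_X^2 ≤ c}, c ∈ ℝ, is bounded in V. (In other words, if E₀ is X-elliptic in the quantitative sense above and E₁ is convex with the stated lower growth bound, then E₀ + E₁ is X-elliptic.) -/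
lemma convexOn_normSq_comp_aux {V X : Type*} [NormedAddCommGroup V] [NormedSpace ℝ V]
    [NormedAddCommGroup X] [NormedSpace ℝ X] (T : V → X)
    (hadd : ∀ x y, T (x + y) = T x + T y) (hsmul : ∀ (c : ℝ) x, T (c • x) = c • T x) :
    ConvexOn ℝ Set.univ (fun f : V => ‖T f‖ ^ 2) := by
  refine ⟨convex_univ, fun x _ y _ a b ha hb hab => ?_⟩
  simp only [smul_eq_mul]
  have h1 : ‖T (a • x + b • y)‖ ≤ a * ‖T x‖ + b * ‖T y‖ := by
    rw [hadd, hsmul, hsmul]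
    calc ‖a • T x + b • T y‖ ≤ ‖a • T x‖ + ‖b • T y‖ := norm_add_le _ _
      _ = a * ‖T x‖ + b * ‖T y‖ := by
        rw [norm_smul, norm_smul, Real.norm_of_nonneg ha, Real.norm_of_nonneg hb]
  have h2 : ‖T (a • x + b • y)‖ ^ 2 ≤ (a * ‖T x‖ + b * ‖T y‖) ^ 2 :=
    pow_le_pow_left₀ (norm_nonneg _) h1 2
  nlinarith [norm_nonneg (T x), norm_nonneg (T y), sq_nonneg (‖T x‖ - ‖T y‖),
    mul_nonneg ha hb]

/-- If `E₀` is `X`-elliptic in the quantitative sense (`f ↦ E₀ f + ω * ‖i (j f)‖ ^ 2` is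
convex and bounded below by `α * ‖f‖ ^ 2` with `α > 0`) and `E₁` is convex with the
growth bound `E₁ f ≥ -k * ‖j f‖ ^ 2 - β`, where the intermediate space `W` satisfies the
interpolation inequality `‖j f‖ ≤ M * ‖f‖ ^ ε * ‖i (j f)‖ ^ (1 - ε)` for some
`ε ∈ [0, 1)`, then `E₀ + E₁` is `X`-elliptic: there is `ω' ≥ 0` such that
`f ↦ E₀ f + E₁ f + ω' * ‖i (j f)‖ ^ 2` is convex and coercive (bounded sublevel sets). -/
theorem elliptic_perturbation
    {V W X : Type*} [NormedAddCommGroup V] [NormedSpace ℝ V]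
    [NormedAddCommGroup W] [NormedSpace ℝ W]
    [NormedAddCommGroup X] [NormedSpace ℝ X]
    (j : V →L[ℝ] W) (i : W →L[ℝ] X)
    (ε M : ℝ) (hε : ε ∈ Set.Ico (0 : ℝ) 1) (hM : 0 < M)
    (hinterp : ∀ f : V, ‖j f‖ ≤ M * ‖f‖ ^ ε * ‖i (j f)‖ ^ (1 - ε))
    (E₀ E₁ : V → ℝ) (α ω k β : ℝ)
    (hα : 0 < α) (hω : 0 ≤ ω) (hk : 0 ≤ k) (hβ : 0 ≤ β)
    (hE₀ : ∀ f : V, α * ‖f‖ ^ 2 ≤ E₀ f + ω * ‖i (j f)‖ ^ 2)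
    (hE₀conv : ConvexOn ℝ Set.univ (fun f : V => E₀ f + ω * ‖i (j f)‖ ^ 2))
    (hE₁ : ∀ f : V, -k * ‖j f‖ ^ 2 - β ≤ E₁ f)
    (hE₁conv : ConvexOn ℝ Set.univ E₁) :
    ∃ ω' ≥ (0 : ℝ),
      ConvexOn ℝ Set.univ (fun f : V => E₀ f + E₁ f + ω' * ‖i (j f)‖ ^ 2) ∧
      ∀ c : ℝ, Bornology.IsBounded
        {f : V | E₀ f + E₁ f + ω' * ‖i (j f)‖ ^ 2 ≤ c} := by
  obtain ⟨hε0, hε1⟩ := hε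
  have h1ε : (0:ℝ) < 1 - ε := by linarith
  set C : ℝ := if ε = 0 then 1 else α / (2 * ε) with hCdef
  have hCpos : 0 < C := by
    rw [hCdef]
    split_ifs with h
    · norm_num
    · have : 0 < ε := lt_of_le_of_ne hε0 (Ne.symm h)
      positivity
  have hCε : 0 < C ^ ε := Real.rpow_pos_of_pos hCpos ε
  set D : ℝ := (k * M ^ 2 / C ^ ε) ^ (1 - ε)⁻¹ with hDdef
  have hD0 : 0 ≤ D := Real.rpow_nonneg (by positivity) _
  have sq_rpow : ∀ (x e : ℝ), 0 ≤ x → (x ^ e) ^ 2 = (x ^ 2 : ℝ) ^ e := by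
    intro x e hx
    rw [← Real.rpow_natCast (x ^ e) 2, ← Real.rpow_mul hx,
      ← Real.rpow_natCast x 2, ← Real.rpow_mul hx, mul_comm]
  have hCD : C ^ ε * D ^ (1 - ε) = k * M ^ 2 := by
    have hD1 : D ^ (1 - ε) = k * M ^ 2 / C ^ ε := by
      rw [hDdef, ← Real.rpow_mul (by positivity), inv_mul_cancel₀ h1ε.ne', Real.rpow_one]
    rw [hD1, mul_comm, div_mul_cancel₀ _ hCε.ne']
  -- key pointwise estimate
  have key : ∀ f : V, k * ‖j f‖ ^ 2 ≤ ε * C * ‖f‖ ^ 2 + (1 - ε) * D * ‖i (j f)‖ ^ 2 := by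
    intro f
    have h0 : (0:ℝ) ≤ M * ‖f‖ ^ ε * ‖i (j f)‖ ^ (1 - ε) := by positivity
    have h1 : ‖j f‖ ^ 2 ≤ (M * ‖f‖ ^ ε * ‖i (j f)‖ ^ (1 - ε)) ^ 2 :=
      pow_le_pow_left₀ (norm_nonneg _) (hinterp f) 2
    have h2 : k * ‖j f‖ ^ 2 ≤ (C * ‖f‖ ^ 2) ^ ε * (D * ‖i (j f)‖ ^ 2) ^ (1 - ε) := by
      have e1 : (C * ‖f‖ ^ 2) ^ ε * (D * ‖i (j f)‖ ^ 2) ^ (1 - ε)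
          = (C ^ ε * D ^ (1 - ε)) * ((‖f‖ ^ ε) ^ 2 * (‖i (j f)‖ ^ (1 - ε)) ^ 2) := by
        rw [Real.mul_rpow hCpos.le (by positivity), Real.mul_rpow hD0 (by positivity),
          ← sq_rpow ‖f‖ ε (norm_nonneg f), ← sq_rpow ‖i (j f)‖ (1 - ε) (norm_nonneg _)]
        ring
      rw [e1, hCD]
      calc k * ‖j f‖ ^ 2 ≤ k * (M * ‖f‖ ^ ε * ‖i (j f)‖ ^ (1 - ε)) ^ 2 := by
            exact mul_le_mul_of_nonneg_left h1 hk
        _ = k * M ^ 2 * ((‖f‖ ^ ε) ^ 2 * (‖i (j f)‖ ^ (1 - ε)) ^ 2) := by ring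
    have h3 := Real.geom_mean_le_arith_mean2_weighted hε0 h1ε.le
      (by positivity : (0:ℝ) ≤ C * ‖f‖ ^ 2) (by positivity : (0:ℝ) ≤ D * ‖i (j f)‖ ^ 2)
      (by ring)
    calc k * ‖j f‖ ^ 2 ≤ (C * ‖f‖ ^ 2) ^ ε * (D * ‖i (j f)‖ ^ 2) ^ (1 - ε) := h2
      _ ≤ ε * (C * ‖f‖ ^ 2) + (1 - ε) * (D * ‖i (j f)‖ ^ 2) := h3
      _ = ε * C * ‖f‖ ^ 2 + (1 - ε) * D * ‖i (j f)‖ ^ 2 := by ring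
  have hεC : ε * C ≤ α / 2 := by
    rw [hCdef]
    split_ifs with h
    · rw [h]; linarith
    · have hεpos : 0 < ε := lt_of_le_of_ne hε0 (Ne.symm h)
      rw [mul_div_assoc']
      rw [div_le_iff₀ (by positivity)]
      ring_nf
      nlinarith
  have hω'0 : (0:ℝ) ≤ ω + (1 - ε) * D := by positivity
  refine ⟨ω + (1 - ε) * D, hω'0, ?_, ?_⟩
  · have hnsq : ConvexOn ℝ Set.univ (fun f : V => ‖i (j f)‖ ^ 2) :=
      convexOn_normSq_comp_aux (fun f => i (j f)) (by intro x y; simp) (by intro c x; simp)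
    have heq : (fun f : V => E₀ f + E₁ f + (ω + (1 - ε) * D) * ‖i (j f)‖ ^ 2)
        = fun f => (E₀ f + ω * ‖i (j f)‖ ^ 2) + (E₁ f + ((1 - ε) * D) * ‖i (j f)‖ ^ 2) := by
      funext f; ring
    rw [heq]
    refine hE₀conv.add (hE₁conv.add ?_)
    have := hnsq.smul (c := (1 - ε) * D) (by positivity)
    simpa [smul_eq_mul] using this
  · intro c
    rw [Metric.isBounded_iff_subset_closedBall 0]
    refine ⟨Real.sqrt (2 * (c + β) / α), fun f hf => ?_⟩
    simp only [Set.mem_setOf_eq] at hf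
    have hb : α / 2 * ‖f‖ ^ 2 - β ≤ c := by
      have h0 := hE₀ f
      have h1 := hE₁ f
      have h2 := key f
      nlinarith [sq_nonneg ‖i (j f)‖, norm_nonneg f, sq_nonneg ‖f‖]
    simp only [Metric.mem_closedBall, dist_zero_right]
    rw [show ‖f‖ = Real.sqrt (‖f‖ ^ 2) by rw [Real.sqrt_sq (norm_nonneg f)]]
    apply Real.sqrt_le_sqrt
    rw [le_div_iff₀ hα]
    nlinarith
end

section
/- Let H be a real Hilbert space and let f : ℝ → H be continuous on [0,1] and differentiable on [0,1] with derivative f' (derivative taken within [0,1] at the endpoints), and assume that t ↦ ‖f(t)‖_H^2 and t ↦ ‖f'(t)‖_H^2 are integrable on (0,1). Set ‖f‖₂ := (∫₀¹ ‖f(t)‖_H^2 dt)^{1/2} and ‖f'‖₂ := (∫₀¹ ‖f'(t)‖_H^2 dt)^{1/2}. Then for every x ∈ [0,1] one has ‖f(x)‖_H^2 ≤ ‖f‖₂^2 + 2‖f‖₂‖f'‖₂. -/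
open MeasureTheory

/-- Pointwise bound for `H`-valued `H¹(0,1)` functions:
`‖f x‖ ^ 2 ≤ ‖f‖₂ ^ 2 + 2 * ‖f‖₂ * ‖f'‖₂` for every `x ∈ [0,1]`. -/
theorem pointwise_sq_bound_of_H1
    {H : Type*} [NormedAddCommGroup H] [InnerProductSpace ℝ H] [CompleteSpace H]
    (f f' : ℝ → H)
    (hcont : ContinuousOn f (Set.Icc 0 1))
    (hderiv : ∀ t ∈ Set.Icc (0 : ℝ) 1, HasDerivWithinAt f (f' t) (Set.Icc 0 1) t)
    (hf2 : IntegrableOn (fun t => ‖f t‖ ^ 2) (Set.Ioo 0 1))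
    (hf'2 : IntegrableOn (fun t => ‖f' t‖ ^ 2) (Set.Ioo 0 1)) :
    ∀ x ∈ Set.Icc (0 : ℝ) 1,
      ‖f x‖ ^ 2 ≤ (∫ t in Set.Ioo (0 : ℝ) 1, ‖f t‖ ^ 2) +
        2 * Real.sqrt (∫ t in Set.Ioo (0 : ℝ) 1, ‖f t‖ ^ 2) *
          Real.sqrt (∫ t in Set.Ioo (0 : ℝ) 1, ‖f' t‖ ^ 2) := by
  intro x hx
  set A : ℝ := ∫ t in Set.Ioo (0 : ℝ) 1, ‖f t‖ ^ 2 with hA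
  set B : ℝ := ∫ t in Set.Ioo (0 : ℝ) 1, ‖f' t‖ ^ 2 with hB
  set g : ℝ → ℝ := fun t => ‖f t‖ ^ 2 with hgdef
  set g' : ℝ → ℝ := fun t => 2 * (inner ℝ (f t) (f' t) : ℝ) with hg'def
  -- derivatives at interior points
  have hDA : ∀ t ∈ Set.Ioo (0 : ℝ) 1, HasDerivAt f (f' t) t := fun t ht =>
    (hderiv t (Set.Ioo_subset_Icc_self ht)).hasDerivAt (Icc_mem_nhds ht.1 ht.2)
  have hgD : ∀ t ∈ Set.Ioo (0 : ℝ) 1, HasDerivAt g (g' t) t := by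
    intro t ht
    have h := (hDA t ht).inner ℝ (hDA t ht)
    have h2 : HasDerivAt (fun s => (inner ℝ (f s) (f s) : ℝ)) (g' t) t := by
      refine h.congr_deriv ?_
      simp only [g', real_inner_comm (f t) (f' t)]
      ring
    have heq : (fun s => (inner ℝ (f s) (f s) : ℝ)) = g := by
      funext s
      simp [hgdef, real_inner_self_eq_norm_sq]
    exact heq ▸ h2
  -- measurability of f and f' on (0,1)
  have hmf : AEStronglyMeasurable f (volume.restrict (Set.Ioo (0:ℝ) 1)) :=
    (hcont.mono Set.Ioo_subset_Icc_self).aestronglyMeasurable measurableSet_Ioo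
  have hmf' : AEStronglyMeasurable f' (volume.restrict (Set.Ioo (0:ℝ) 1)) := by
    refine (stronglyMeasurable_deriv f).aestronglyMeasurable.congr ?_
    rw [Filter.EventuallyEq, ae_restrict_iff' measurableSet_Ioo]
    exact Filter.Eventually.of_forall fun t ht => ((hDA t ht).deriv)
  have hnn : (0:ℝ) ≤ A :=
    setIntegral_nonneg measurableSet_Ioo fun t _ => by positivity
  have hnn' : (0:ℝ) ≤ B :=
    setIntegral_nonneg measurableSet_Ioo fun t _ => by positivity
  -- Cauchy-Schwarz in L²
  have hMf : MemLp (fun t => ‖f t‖) 2 (volume.restrict (Set.Ioo (0:ℝ) 1)) := by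
    rw [memLp_two_iff_integrable_sq hmf.norm]; exact hf2
  have hMf' : MemLp (fun t => ‖f' t‖) 2 (volume.restrict (Set.Ioo (0:ℝ) 1)) := by
    rw [memLp_two_iff_integrable_sq hmf'.norm]; exact hf'2
  have hCS : (∫ t in Set.Ioo (0:ℝ) 1, ‖f t‖ * ‖f' t‖) ≤ Real.sqrt A * Real.sqrt B := by
    have hconj : (2:ℝ).HolderConjugate 2 := Real.HolderConjugate.two_two
    have h2 : ENNReal.ofReal (2:ℝ) = 2 := by norm_num
    have hH := integral_mul_le_Lp_mul_Lq_of_nonneg (μ := volume.restrict (Set.Ioo (0:ℝ) 1))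
      hconj (Filter.Eventually.of_forall fun t => norm_nonneg _)
      (Filter.Eventually.of_forall fun t => norm_nonneg _) (h2 ▸ hMf) (h2 ▸ hMf')
    calc (∫ t in Set.Ioo (0:ℝ) 1, ‖f t‖ * ‖f' t‖)
        ≤ (∫ t in Set.Ioo (0:ℝ) 1, ‖f t‖ ^ (2:ℝ)) ^ (1/(2:ℝ)) *
          (∫ t in Set.Ioo (0:ℝ) 1, ‖f' t‖ ^ (2:ℝ)) ^ (1/(2:ℝ)) := hH
      _ = Real.sqrt A * Real.sqrt B := by
          rw [Real.sqrt_eq_rpow, Real.sqrt_eq_rpow, hA, hB]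
          norm_num [Real.rpow_two]
          exact Or.inl rfl
  -- integrability of the product and of g'
  have hprod : IntegrableOn (fun t => ‖f t‖ * ‖f' t‖) (Set.Ioo (0:ℝ) 1) := by
    refine (hf2.add hf'2).mono' (hmf.norm.mul hmf'.norm) ?_
    filter_upwards with t
    have h1 : ‖f t‖ * ‖f' t‖ ≤ ‖f t‖^2 + ‖f' t‖^2 := by
      nlinarith [norm_nonneg (f t), norm_nonneg (f' t), sq_nonneg (‖f t‖ - ‖f' t‖)]
    have h2 : |‖f t‖ * ‖f' t‖| = ‖f t‖ * ‖f' t‖ := abs_of_nonneg (by positivity)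
    simpa [Real.norm_eq_abs, h2] using h1
  have hg'int : IntegrableOn g' (Set.Ioo (0:ℝ) 1) := by
    refine (hprod.const_mul 2).mono' ((hmf.inner hmf' : AEStronglyMeasurable (fun t => (inner ℝ (f t) (f' t) : ℝ)) _).const_mul 2) ?_
    filter_upwards with t
    have h := abs_real_inner_le_norm (f t) (f' t)
    simp only [hg'def, Real.norm_eq_abs, abs_mul, abs_two]
    nlinarith [abs_nonneg (inner ℝ (f t) (f' t) : ℝ)]
  have hg'intIcc : IntegrableOn g' (Set.Icc (0:ℝ) 1) :=
    (integrableOn_Icc_iff_integrableOn_Ioo).2 hg'int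
  set D : ℝ := ∫ t in Set.Ioo (0:ℝ) 1, |g' t| with hD
  have hDnn : (0:ℝ) ≤ D :=
    setIntegral_nonneg measurableSet_Ioo fun t _ => abs_nonneg _
  have hDle : D ≤ 2 * Real.sqrt A * Real.sqrt B := by
    have hle : ∀ t ∈ Set.Ioo (0:ℝ) 1, |g' t| ≤ 2 * (‖f t‖ * ‖f' t‖) := by
      intro t _
      have h := abs_real_inner_le_norm (f t) (f' t)
      simp only [hg'def, abs_mul, abs_two]
      nlinarith
    calc D ≤ ∫ t in Set.Ioo (0:ℝ) 1, 2 * (‖f t‖ * ‖f' t‖) :=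
          setIntegral_mono_on hg'int.abs (hprod.const_mul 2) measurableSet_Ioo hle
      _ = 2 * ∫ t in Set.Ioo (0:ℝ) 1, ‖f t‖ * ‖f' t‖ := integral_const_mul 2 _
      _ ≤ 2 * (Real.sqrt A * Real.sqrt B) := by linarith
      _ = 2 * Real.sqrt A * Real.sqrt B := by ring
  -- FTC: g b - g a ≤ D for a ≤ b in [0,1]
  have key : ∀ a ∈ Set.Icc (0:ℝ) 1, ∀ b ∈ Set.Icc (0:ℝ) 1, a ≤ b → |g b - g a| ≤ D := by
    intro a ha b hb hab
    have hsub : Set.Ioo a b ⊆ Set.Ioo (0:ℝ) 1 := fun t ht =>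
      ⟨lt_of_le_of_lt ha.1 ht.1, lt_of_lt_of_le ht.2 hb.2⟩
    have hcg : ContinuousOn g (Set.Icc a b) :=
      ((hcont.norm.mono (Set.Icc_subset_Icc ha.1 hb.2)).pow 2)
    have hgD' : ∀ t ∈ Set.Ioo a b, HasDerivWithinAt g (g' t) (Set.Ioi t) t := fun t ht =>
      (hgD t (hsub ht)).hasDerivWithinAt
    have hii : IntervalIntegrable g' volume a b := by
      rw [intervalIntegrable_iff_integrableOn_Icc_of_le hab]
      exact hg'intIcc.mono_set (Set.Icc_subset_Icc ha.1 hb.2)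
    have hftc : ∫ t in a..b, g' t = g b - g a :=
      intervalIntegral.integral_eq_sub_of_hasDeriv_right_of_le hab hcg hgD' hii
    have habs : |∫ t in a..b, g' t| ≤ D := by
      have h1 : |∫ t in a..b, g' t| ≤ ∫ t in a..b, |g' t| :=
        intervalIntegral.abs_integral_le_integral_abs hab
      have h2 : ∫ t in a..b, |g' t| = ∫ t in Set.Ioc a b, |g' t| :=
        intervalIntegral.integral_of_le hab
      have h3 : ∫ t in Set.Ioc a b, |g' t| ≤ ∫ t in Set.Icc (0:ℝ) 1, |g' t| := by
        refine setIntegral_mono_set hg'intIcc.abs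
          (Filter.Eventually.of_forall fun t => abs_nonneg _) ?_
        exact Filter.Eventually.of_forall fun t ht =>
          ⟨le_trans ha.1 (le_of_lt ht.1), le_trans ht.2 hb.2⟩
      have h4 : ∫ t in Set.Icc (0:ℝ) 1, |g' t| = D := integral_Icc_eq_integral_Ioo
      linarith
    exact hftc ▸ habs
  -- pointwise comparison with interior values
  have key2 : ∀ y ∈ Set.Ioo (0:ℝ) 1, g x ≤ g y + D := by
    intro y hy
    have hy' : y ∈ Set.Icc (0:ℝ) 1 := Set.Ioo_subset_Icc_self hy
    rcases le_total x y with h | h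
    · have hk := key x hx y hy' h
      have := abs_le.1 hk
      linarith [this.1]
    · have hk := key y hy' x hx h
      have := abs_le.1 hk
      linarith [this.2]
  -- integrate over y in (0,1)
  have hvol : (volume (Set.Ioo (0:ℝ) 1)).toReal = 1 := by
    simp [Real.volume_Ioo]
  have hgx : g x = ∫ _ in Set.Ioo (0:ℝ) 1, g x := by
    rw [setIntegral_const, measureReal_def, hvol, one_smul]
  have hmono : (∫ _ in Set.Ioo (0:ℝ) 1, g x) ≤ ∫ y in Set.Ioo (0:ℝ) 1, (g y + D) := by
    refine setIntegral_mono_on (integrableOn_const ?_)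
      (hf2.add (integrableOn_const ?_)) measurableSet_Ioo key2
    · simp [Real.volume_Ioo]
    · simp [Real.volume_Ioo]
  have hsum : (∫ y in Set.Ioo (0:ℝ) 1, (g y + D)) = A + D := by
    rw [integral_add hf2 (integrableOn_const (by simp [Real.volume_Ioo]))]
    rw [setIntegral_const, measureReal_def, hvol, one_smul]
  have : g x ≤ A + D := by
    rw [hgx]
    calc (∫ _ in Set.Ioo (0:ℝ) 1, g x) ≤ ∫ y in Set.Ioo (0:ℝ) 1, (g y + D) := hmono
      _ = A + D := hsum
  calc ‖f x‖ ^ 2 = g x := rfl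
    _ ≤ A + D := this
    _ ≤ A + 2 * Real.sqrt A * Real.sqrt B := by linarith
end

section
/- Let H be a real Hilbert space and let f : ℝ → H be continuous on [0,1] and differentiable on [0,1] with derivative f' (derivative taken within [0,1] at the endpoints), and assume that t ↦ ‖f(t)‖_H^2 and t ↦ ‖f'(t)‖_H^2 are integrable on (0,1). Set ‖f‖₂ := (∫₀¹ ‖f(t)‖_H^2 dt)^{1/2}, ‖f'‖₂ := (∫₀¹ ‖f'(t)‖_H^2 dt)^{1/2}, and ‖f‖_{H¹} := (‖f‖₂^2 + ‖f'‖₂^2)^{1/2}. Then for every x ∈ [0,1] one has ‖f(x)‖_H^2 ≤ 4 · ‖f‖_{H¹} · ‖f‖₂; in particular the sup-norm of f on [0,1] satisfies ‖f‖_∞^2 ≤ 4‖f‖_{H¹}‖f‖₂. -/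
open MeasureTheory Set
open scoped RealInnerProductSpace

/-- Pointwise bound for `H`-valued `H¹(0,1)` functions:
`‖f x‖ ^ 2 ≤ 4 * ‖f‖_{H¹} * ‖f‖₂` for every `x ∈ [0,1]`; in particular the sup-norm
satisfies `‖f‖_∞ ^ 2 ≤ 4 * ‖f‖_{H¹} * ‖f‖₂`. -/
theorem sup_sq_le_four_H1_mul_L2
    {H : Type*} [NormedAddCommGroup H] [InnerProductSpace ℝ H] [CompleteSpace H]
    (f f' : ℝ → H)
    (hcont : ContinuousOn f (Set.Icc 0 1))
    (hderiv : ∀ t ∈ Set.Icc (0 : ℝ) 1, HasDerivWithinAt f (f' t) (Set.Icc 0 1) t)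
    (hf2 : IntegrableOn (fun t => ‖f t‖ ^ 2) (Set.Ioo 0 1))
    (hf'2 : IntegrableOn (fun t => ‖f' t‖ ^ 2) (Set.Ioo 0 1)) :
    (∀ x ∈ Set.Icc (0 : ℝ) 1,
      ‖f x‖ ^ 2 ≤ 4 * Real.sqrt ((∫ t in Set.Ioo (0 : ℝ) 1, ‖f t‖ ^ 2) +
          (∫ t in Set.Ioo (0 : ℝ) 1, ‖f' t‖ ^ 2)) *
        Real.sqrt (∫ t in Set.Ioo (0 : ℝ) 1, ‖f t‖ ^ 2)) ∧
    (sSup ((fun x => ‖f x‖) '' Set.Icc (0 : ℝ) 1)) ^ 2 ≤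
      4 * Real.sqrt ((∫ t in Set.Ioo (0 : ℝ) 1, ‖f t‖ ^ 2) +
          (∫ t in Set.Ioo (0 : ℝ) 1, ‖f' t‖ ^ 2)) *
        Real.sqrt (∫ t in Set.Ioo (0 : ℝ) 1, ‖f t‖ ^ 2) := by
  borelize H
  set A := ∫ t in Set.Ioo (0 : ℝ) 1, ‖f t‖ ^ 2 with hAdef
  set B := ∫ t in Set.Ioo (0 : ℝ) 1, ‖f' t‖ ^ 2 with hBdef
  have hA0 : 0 ≤ A := setIntegral_nonneg measurableSet_Ioo fun t _ => sq_nonneg _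
  have hB0 : 0 ≤ B := setIntegral_nonneg measurableSet_Ioo fun t _ => sq_nonneg _
  -- measurability
  have hfm : AEStronglyMeasurable f (volume.restrict (Ioo (0:ℝ) 1)) :=
    (hcont.mono Ioo_subset_Icc_self).aestronglyMeasurable measurableSet_Ioo
  have hderiv' : ∀ t ∈ Ioo (0:ℝ) 1, HasDerivAt f (f' t) t := fun t ht =>
    (hderiv t (Ioo_subset_Icc_self ht)).hasDerivAt (Icc_mem_nhds ht.1 ht.2)
  have hf'm : AEStronglyMeasurable f' (volume.restrict (Ioo (0:ℝ) 1)) := by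
    refine (stronglyMeasurable_deriv f).aestronglyMeasurable.congr ?_
    refine (ae_restrict_iff' measurableSet_Ioo).2 (ae_of_all _ fun t ht => ?_)
    exact (hderiv' t ht).deriv
  -- Cauchy-Schwarz
  have hfL2 : MemLp f (ENNReal.ofReal 2) (volume.restrict (Ioo (0:ℝ) 1)) := by
    rw [show ENNReal.ofReal (2:ℝ) = 2 by norm_num]
    exact (memLp_two_iff_integrable_sq_norm hfm).2 hf2
  have hf'L2 : MemLp f' (ENNReal.ofReal 2) (volume.restrict (Ioo (0:ℝ) 1)) := by
    rw [show ENNReal.ofReal (2:ℝ) = 2 by norm_num]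
    exact (memLp_two_iff_integrable_sq_norm hf'm).2 hf'2
  have hpq : Real.HolderConjugate 2 2 := Real.HolderConjugate.two_two
  have CS : ∫ t in Ioo (0:ℝ) 1, ‖f t‖ * ‖f' t‖ ≤ Real.sqrt A * Real.sqrt B := by
    have h := integral_mul_norm_le_Lp_mul_Lq hpq hfL2 hf'L2
    simpa [Real.rpow_two, Real.sqrt_eq_rpow, hAdef, hBdef] using h
  -- the derivative of ‖f‖²
  set D : ℝ → ℝ := fun t => ⟪f t, f' t⟫ + ⟪f' t, f t⟫ with hDdef
  have hgderiv : ∀ t ∈ Ioo (0:ℝ) 1, HasDerivAt (fun t => ‖f t‖ ^ 2) (D t) t := by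
    intro t ht
    have := HasDerivAt.inner ℝ (hderiv' t ht) (hderiv' t ht)
    simpa only [real_inner_self_eq_norm_sq] using this
  have hDbound : ∀ t, |D t| ≤ 2 * (‖f t‖ * ‖f' t‖) := by
    intro t
    calc |D t| ≤ |⟪f t, f' t⟫| + |⟪f' t, f t⟫| := abs_add_le _ _
      _ ≤ ‖f t‖ * ‖f' t‖ + ‖f' t‖ * ‖f t‖ :=
        add_le_add (abs_real_inner_le_norm _ _) (abs_real_inner_le_norm _ _)
      _ = 2 * (‖f t‖ * ‖f' t‖) := by ring
  set h : ℝ → ℝ := fun t => 2 * (‖f t‖ * ‖f' t‖) with hhdef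
  have hh0 : ∀ t, 0 ≤ h t := fun t => by positivity
  have hhm : AEStronglyMeasurable h (volume.restrict (Ioo (0:ℝ) 1)) :=
    ((hfm.norm.mul hf'm.norm).const_mul 2)
  have hhint : IntegrableOn h (Ioo (0:ℝ) 1) := by
    refine (hf2.add hf'2).mono' hhm (ae_of_all _ fun t => ?_)
    rw [Real.norm_of_nonneg (hh0 t)]
    have h1 := norm_nonneg (f t); have h2 := norm_nonneg (f' t)
    simp only [h, Pi.add_apply]
    nlinarith [sq_nonneg (‖f t‖ - ‖f' t‖)]
  have hDm : AEStronglyMeasurable D (volume.restrict (Ioo (0:ℝ) 1)) :=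
    (hfm.inner hf'm).add (hf'm.inner hfm)
  have hDint : IntegrableOn D (Ioo (0:ℝ) 1) := by
    refine hhint.mono' hDm (ae_of_all _ fun t => ?_)
    rw [Real.norm_eq_abs]; exact hDbound t
  have hrIcc : volume.restrict (Icc (0:ℝ) 1) = volume.restrict (Ioo (0:ℝ) 1) :=
    (Measure.restrict_congr_set Ioo_ae_eq_Icc).symm
  have hhintIcc : IntegrableOn h (Icc (0:ℝ) 1) := by
    rw [IntegrableOn, hrIcc]; exact hhint
  have hDintIcc : IntegrableOn D (Icc (0:ℝ) 1) := by
    rw [IntegrableOn, hrIcc]; exact hDint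
  -- FTC bound
  have key : ∀ a b, a ∈ Icc (0:ℝ) 1 → b ∈ Icc (0:ℝ) 1 → a ≤ b →
      |‖f b‖ ^ 2 - ‖f a‖ ^ 2| ≤ ∫ t in Ioo (0:ℝ) 1, h t := by
    intro a b ha hb hab
    have hsub : Icc a b ⊆ Icc (0:ℝ) 1 := Icc_subset_Icc ha.1 hb.2
    have hDi : IntervalIntegrable D volume a b := by
      apply IntegrableOn.intervalIntegrable
      rw [uIcc_of_le hab]
      exact hDintIcc.mono_set hsub
    have hhi : IntervalIntegrable h volume a b := by
      apply IntegrableOn.intervalIntegrable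
      rw [uIcc_of_le hab]
      exact hhintIcc.mono_set hsub
    have hft : ∫ t in a..b, D t = ‖f b‖ ^ 2 - ‖f a‖ ^ 2 := by
      refine intervalIntegral.integral_eq_sub_of_hasDeriv_right_of_le hab
        ((hcont.mono hsub).norm.pow 2) (fun t ht => ?_) hDi
      exact (hgderiv t (Ioo_subset_Ioo ha.1 hb.2 ht)).hasDerivWithinAt
    rw [← hft]
    calc |∫ t in a..b, D t| ≤ ∫ t in a..b, |D t| :=
          intervalIntegral.abs_integral_le_integral_abs hab
      _ ≤ ∫ t in a..b, h t := by
          refine intervalIntegral.integral_mono_on hab hDi.abs hhi fun t _ => hDbound t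
      _ = ∫ t in Ioc a b, h t := intervalIntegral.integral_of_le hab
      _ ≤ ∫ t in Icc (0:ℝ) 1, h t := by
          refine setIntegral_mono_set hhintIcc (ae_of_all _ hh0) ?_
          exact HasSubset.Subset.eventuallyLE (Ioc_subset_Icc_self.trans hsub)
      _ = ∫ t in Ioo (0:ℝ) 1, h t := setIntegral_congr_set Ioo_ae_eq_Icc.symm
  -- minimum point
  obtain ⟨y, hy, hymin⟩ := isCompact_Icc.exists_isMinOn (nonempty_Icc.2 zero_le_one)
    (hcont.norm.pow 2)
  have hgyA : ‖f y‖ ^ 2 ≤ A := by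
    have h1 : ∫ (_ : ℝ) in Ioo (0:ℝ) 1, ‖f y‖ ^ 2 ≤ A := by
      refine setIntegral_mono_on (integrableOn_const measure_Ioo_lt_top.ne) hf2
        measurableSet_Ioo fun t ht => ?_
      exact isMinOn_iff.mp hymin t (Ioo_subset_Icc_self ht)
    simpa [Real.volume_Ioo] using h1
  have hCS2 : ∫ t in Ioo (0:ℝ) 1, h t ≤ 2 * (Real.sqrt A * Real.sqrt B) := by
    have : ∫ t in Ioo (0:ℝ) 1, h t = 2 * ∫ t in Ioo (0:ℝ) 1, ‖f t‖ * ‖f' t‖ := by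
      simp [hhdef, integral_const_mul]
    rw [this]
    linarith [CS]
  -- pointwise bound
  have harith : A + 2 * (Real.sqrt A * Real.sqrt B) ≤ 4 * Real.sqrt (A + B) * Real.sqrt A := by
    have h1 : Real.sqrt A ≤ Real.sqrt (A + B) := Real.sqrt_le_sqrt (by linarith)
    have h2 : Real.sqrt B ≤ Real.sqrt (A + B) := Real.sqrt_le_sqrt (by linarith)
    have h3 : Real.sqrt A * Real.sqrt A = A := Real.mul_self_sqrt hA0
    nlinarith [Real.sqrt_nonneg A, Real.sqrt_nonneg B, Real.sqrt_nonneg (A + B),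
      mul_le_mul_of_nonneg_right h1 (Real.sqrt_nonneg A),
      mul_le_mul_of_nonneg_right h2 (Real.sqrt_nonneg A),
      mul_nonneg (Real.sqrt_nonneg (A + B)) (Real.sqrt_nonneg A)]
  have main : ∀ x ∈ Icc (0:ℝ) 1, ‖f x‖ ^ 2 ≤ 4 * Real.sqrt (A + B) * Real.sqrt A := by
    intro x hx
    have hb : ‖f x‖ ^ 2 ≤ A + 2 * (Real.sqrt A * Real.sqrt B) := by
      rcases le_total y x with hyx | hxy
      · have := key y x hy hx hyx
        have h2 := abs_le.mp this
        linarith [h2.2, hgyA, hCS2]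
      · have := key x y hx hy hxy
        have h2 := abs_le.mp this
        linarith [h2.1, hgyA, hCS2]
    linarith
  refine ⟨main, ?_⟩
  -- sup bound
  set C := 4 * Real.sqrt (A + B) * Real.sqrt A with hCdef
  have hC0 : 0 ≤ C := by positivity
  have hsup : sSup ((fun x => ‖f x‖) '' Icc (0:ℝ) 1) ≤ Real.sqrt C := by
    refine Real.sSup_le ?_ (Real.sqrt_nonneg C)
    rintro s ⟨x, hx, rfl⟩
    calc ‖f x‖ = Real.sqrt (‖f x‖ ^ 2) := (Real.sqrt_sq (norm_nonneg _)).symm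
      _ ≤ Real.sqrt C := Real.sqrt_le_sqrt (main x hx)
  have hsup0 : 0 ≤ sSup ((fun x => ‖f x‖) '' Icc (0:ℝ) 1) := by
    refine Real.sSup_nonneg fun s hs => ?_
    obtain ⟨x, _, rfl⟩ := hs
    exact norm_nonneg _
  calc (sSup ((fun x => ‖f x‖) '' Icc (0:ℝ) 1)) ^ 2 ≤ Real.sqrt C ^ 2 :=
        pow_le_pow_left₀ hsup0 hsup 2
    _ = C := Real.sq_sqrt hC0
end

section
/- Let H be a real Hilbert space and let f : ℝ → H be continuous on [0,1] and differentiable on [0,1] with derivative f' (derivative taken within [0,1] at the endpoints), and assume that t ↦ ‖f(t)‖_H^2 and t ↦ ‖f'(t)‖_H^2 are integrable on (0,1). Set ‖f‖₂ := (∫₀¹ ‖f(t)‖_H^2 dt)^{1/2} and ‖f'‖₂ := (∫₀¹ ‖f'(t)‖_H^2 dt)^{1/2}. Then the boundary trace of f satisfies ‖f(0)‖_H^2 + ‖f(1)‖_H^2 ≤ 2 · sup_{x ∈ [0,1]} ‖f(x)‖_H^2 ≤ 4 · (‖f‖₂^2 + ‖f'‖₂^2); in particular ‖(f(0), f(1))‖_{H×H}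 ≤ √2 ‖f‖_∞ ≤ 2 ‖f‖_{H¹}, where ‖f‖_{H¹} := (‖f‖₂² + ‖f'‖₂²)^{1/2}. -/
open MeasureTheory

/-- Trace estimate for `H`-valued `H¹(0,1)` functions:
`‖f 0‖ ^ 2 + ‖f 1‖ ^ 2 ≤ 2 * ‖f‖_∞ ^ 2 ≤ 4 * (‖f‖₂ ^ 2 + ‖f'‖₂ ^ 2)`; in particular
`‖(f 0, f 1)‖_{H × H} ≤ √2 * ‖f‖_∞ ≤ 2 * ‖f‖_{H¹}`, where the norm on `H × H` is the
Euclidean one, `‖(a, b)‖ = √(‖a‖ ^ 2 + ‖b‖ ^ 2)`. -/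
theorem trace_estimate_H1
    {H : Type*} [NormedAddCommGroup H] [InnerProductSpace ℝ H] [CompleteSpace H]
    (f f' : ℝ → H)
    (hcont : ContinuousOn f (Set.Icc 0 1))
    (hderiv : ∀ t ∈ Set.Icc (0 : ℝ) 1, HasDerivWithinAt f (f' t) (Set.Icc 0 1) t)
    (hf2 : IntegrableOn (fun t => ‖f t‖ ^ 2) (Set.Ioo 0 1))
    (hf'2 : IntegrableOn (fun t => ‖f' t‖ ^ 2) (Set.Ioo 0 1)) :
    (‖f 0‖ ^ 2 + ‖f 1‖ ^ 2 ≤ 2 * sSup ((fun x => ‖f x‖ ^ 2) '' Set.Icc (0 : ℝ) 1)) ∧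
    (2 * sSup ((fun x => ‖f x‖ ^ 2) '' Set.Icc (0 : ℝ) 1) ≤
      4 * ((∫ t in Set.Ioo (0 : ℝ) 1, ‖f t‖ ^ 2) +
        (∫ t in Set.Ioo (0 : ℝ) 1, ‖f' t‖ ^ 2))) ∧
    (Real.sqrt (‖f 0‖ ^ 2 + ‖f 1‖ ^ 2) ≤
      Real.sqrt 2 * sSup ((fun x => ‖f x‖) '' Set.Icc (0 : ℝ) 1)) ∧
    (Real.sqrt 2 * sSup ((fun x => ‖f x‖) '' Set.Icc (0 : ℝ) 1) ≤
      2 * Real.sqrt ((∫ t in Set.Ioo (0 : ℝ) 1, ‖f t‖ ^ 2) +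
        (∫ t in Set.Ioo (0 : ℝ) 1, ‖f' t‖ ^ 2))) := by
  set g : ℝ → ℝ := fun t => ‖f t‖ ^ 2 with hgdef
  set phi : ℝ → ℝ := fun t => 2 * (inner ℝ (f t) (f' t) : ℝ) with hphidef
  set A : ℝ := ∫ t in Set.Ioo (0 : ℝ) 1, ‖f t‖ ^ 2 with hAdef
  set B : ℝ := ∫ t in Set.Ioo (0 : ℝ) 1, ‖f' t‖ ^ 2 with hBdef
  -- continuity of g
  have hgcont : ContinuousOn g (Set.Icc 0 1) := (hcont.norm).pow 2
  -- derivative of g within the interval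
  have hgderiv : ∀ t ∈ Set.Icc (0 : ℝ) 1, HasDerivWithinAt g (phi t) (Set.Icc 0 1) t := by
    intro t ht
    have h := (hderiv t ht).inner ℝ (hderiv t ht)
    have he : (inner ℝ (f t) (f' t) : ℝ) + (inner ℝ (f' t) (f t) : ℝ) = phi t := by
      have hc := real_inner_comm (f' t) (f t)
      simp only [hphidef]; linarith
    rw [he] at h
    exact h.congr (fun x _ => (real_inner_self_eq_norm_sq (f x)).symm)
      (real_inner_self_eq_norm_sq (f t)).symm
  -- at interior points, g has an honest derivative
  have hgderiv' : ∀ t ∈ Set.Ioo (0 : ℝ) 1, HasDerivAt g (phi t) t := fun t ht =>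
    (hgderiv t (Set.Ioo_subset_Icc_self ht)).hasDerivAt (Icc_mem_nhds ht.1 ht.2)
  have hfderiv' : ∀ t ∈ Set.Ioo (0 : ℝ) 1, HasDerivAt f (f' t) t := fun t ht =>
    (hderiv t (Set.Ioo_subset_Icc_self ht)).hasDerivAt (Icc_mem_nhds ht.1 ht.2)
  -- measurability of phi on (0,1)
  have hfm : AEStronglyMeasurable f (volume.restrict (Set.Ioo (0 : ℝ) 1)) :=
    (hcont.mono Set.Ioo_subset_Icc_self).aestronglyMeasurable measurableSet_Ioo
  have hphim : AEStronglyMeasurable phi (volume.restrict (Set.Ioo (0 : ℝ) 1)) := by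
    have h1 : AEStronglyMeasurable (fun t => 2 * (inner ℝ (f t) (deriv f t) : ℝ))
        (volume.restrict (Set.Ioo (0 : ℝ) 1)) :=
      aestronglyMeasurable_const.mul
        (hfm.inner ((stronglyMeasurable_deriv f).aestronglyMeasurable))
    refine h1.congr ?_
    filter_upwards [ae_restrict_mem measurableSet_Ioo] with t ht
    rw [(hfderiv' t ht).deriv]
  -- pointwise bound for |phi|
  have hbound : ∀ t ∈ Set.Ioo (0 : ℝ) 1, |phi t| ≤ ‖f t‖ ^ 2 + ‖f' t‖ ^ 2 := by
    intro t _
    have h1 : |phi t| ≤ 2 * (‖f t‖ * ‖f' t‖) := by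
      rw [hphidef, abs_mul, abs_two]
      exact mul_le_mul_of_nonneg_left (abs_real_inner_le_norm _ _) (by norm_num)
    refine h1.trans ?_
    have := two_mul_le_add_sq ‖f t‖ ‖f' t‖
    nlinarith [this]
  -- integrability of phi on (0,1)
  have hphiint : IntegrableOn phi (Set.Ioo (0 : ℝ) 1) := by
    refine Integrable.mono' (hf2.add hf'2) hphim ?_
    filter_upwards [ae_restrict_mem measurableSet_Ioo] with t ht
    simpa [Real.norm_eq_abs] using hbound t ht
  set C : ℝ := ∫ t in Set.Ioo (0 : ℝ) 1, |phi t| with hCdef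
  have habsint : IntegrableOn (fun t => |phi t|) (Set.Ioo (0 : ℝ) 1) := hphiint.abs
  have hC_le : C ≤ A + B := by
    have h := setIntegral_mono_on habsint (hf2.add hf'2) measurableSet_Ioo hbound
    simp only [Pi.add_apply] at h
    rwa [integral_add hf2 hf'2] at h
  have hC0 : 0 ≤ C := setIntegral_nonneg measurableSet_Ioo (fun t _ => abs_nonneg _)
  have hA0 : 0 ≤ A := setIntegral_nonneg measurableSet_Ioo (fun t _ => sq_nonneg _)
  have hB0 : 0 ≤ B := setIntegral_nonneg measurableSet_Ioo (fun t _ => sq_nonneg _)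
  -- interval integrability of phi on subintervals of [0,1]
  have hII : ∀ a b : ℝ, a ∈ Set.Icc (0 : ℝ) 1 → b ∈ Set.Icc (0 : ℝ) 1 →
      IntervalIntegrable phi volume a b := by
    intro a b ha hb
    rw [intervalIntegrable_iff]
    refine (hphiint.congr_set_ae Ioo_ae_eq_Ioc.symm).mono_set ?_
    rw [Set.uIoc]
    exact Set.Ioc_subset_Ioc (le_min ha.1 hb.1) (max_le ha.2 hb.2)
  -- key pointwise estimate via FTC
  have key : ∀ y ∈ Set.Icc (0 : ℝ) 1, ∀ x ∈ Set.Icc (0 : ℝ) 1, g x ≤ g y + C := by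
    intro y hy x hx
    have habs : ∀ a b : ℝ, a ∈ Set.Icc (0 : ℝ) 1 → b ∈ Set.Icc (0 : ℝ) 1 →
        |∫ t in a..b, phi t| ≤ C := by
      intro a b ha hb
      have h1 : ‖∫ t in a..b, phi t‖ ≤ ∫ t in Set.uIoc a b, ‖phi t‖ :=
        intervalIntegral.norm_integral_le_integral_norm_uIoc
      rw [Real.norm_eq_abs] at h1
      refine h1.trans ?_
      have hsub : (Set.uIoc a b : Set ℝ) ≤ᵐ[volume] Set.Ioo (0 : ℝ) 1 := by
        have h2 : (Set.uIoc a b : Set ℝ) ⊆ Set.Ioc 0 1 := by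
          rw [Set.uIoc]
          exact Set.Ioc_subset_Ioc (le_min ha.1 hb.1) (max_le ha.2 hb.2)
        exact h2.eventuallyLE.trans (Ioo_ae_eq_Ioc (a := (0:ℝ)) (b := 1)).symm.le
      have := setIntegral_mono_set habsint
        (Filter.Eventually.of_forall fun t => abs_nonneg _) hsub
      simpa [Real.norm_eq_abs] using this
    have hftc : ∀ a b : ℝ, a ∈ Set.Icc (0 : ℝ) 1 → b ∈ Set.Icc (0 : ℝ) 1 → a ≤ b →
        g b - g a = ∫ t in a..b, phi t := by
      intro a b ha hb hab
      refine (intervalIntegral.integral_eq_sub_of_hasDeriv_right_of_le hab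
        (hgcont.mono (Set.Icc_subset_Icc ha.1 hb.2)) ?_ (hII a b ha hb)).symm
      intro t ht
      exact (hgderiv' t ⟨lt_of_le_of_lt ha.1 ht.1, lt_of_lt_of_le ht.2 hb.2⟩).hasDerivWithinAt
    rcases le_total y x with h | h
    · have h1 := hftc y x hy hx h
      have h2 := habs y x hy hx
      have := abs_le.mp h2
      linarith [this.2, h1]
    · have h1 := hftc x y hx hy h
      have h2 := habs x y hx hy
      have := abs_le.mp h2
      linarith [this.1, h1]
  -- the maximum point
  obtain ⟨x₀, hx₀, hmax⟩ := isCompact_Icc.exists_isMaxOn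
    (Set.nonempty_Icc.2 (zero_le_one' ℝ)) hgcont
  have hMsup : sSup (g '' Set.Icc (0 : ℝ) 1) = g x₀ :=
    IsGreatest.csSup_eq ⟨⟨x₀, hx₀, rfl⟩, by rintro _ ⟨x, hx, rfl⟩; exact hmax hx⟩
  have hSsup : sSup ((fun x => ‖f x‖) '' Set.Icc (0 : ℝ) 1) = ‖f x₀‖ := by
    refine IsGreatest.csSup_eq ⟨⟨x₀, hx₀, rfl⟩, ?_⟩
    rintro _ ⟨x, hx, rfl⟩
    exact (pow_le_pow_iff_left₀ (norm_nonneg _) (norm_nonneg _) two_ne_zero).mp (hmax hx)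
  -- integral bound for the max
  have hM_le : g x₀ ≤ A + C := by
    have hconst : IntegrableOn (fun _ : ℝ => g x₀ : ℝ → ℝ) (Set.Ioo (0 : ℝ) 1) := by
      exact integrableOn_const (by simp [Real.volume_Ioo])
    have hgC : IntegrableOn (fun y => g y + C) (Set.Ioo (0 : ℝ) 1) := by
      exact hf2.add (integrableOn_const (by simp [Real.volume_Ioo]))
    have h1 : (∫ _ in Set.Ioo (0 : ℝ) 1, g x₀) = g x₀ := by
      simp [Real.volume_Ioo]
    have h2 : (∫ y in Set.Ioo (0 : ℝ) 1, (g y + C)) = A + C := by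
      rw [integral_add hf2 (integrableOn_const (by simp [Real.volume_Ioo]))]
      simp [Real.volume_Ioo, hAdef, hgdef]
    calc g x₀ = ∫ _ in Set.Ioo (0 : ℝ) 1, g x₀ := h1.symm
      _ ≤ ∫ y in Set.Ioo (0 : ℝ) 1, (g y + C) := by
          refine setIntegral_mono_on hconst hgC measurableSet_Ioo ?_
          intro y hy
          exact key y (Set.Ioo_subset_Icc_self hy) x₀ hx₀
      _ = A + C := h2
  have hMAB : g x₀ ≤ 2 * A + B := by linarith
  -- assemble conclusions
  have hg0 : g 0 ≤ g x₀ := hmax (Set.left_mem_Icc.2 zero_le_one)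
  have hg1 : g 1 ≤ g x₀ := hmax (Set.right_mem_Icc.2 zero_le_one)
  have part1 : ‖f 0‖ ^ 2 + ‖f 1‖ ^ 2 ≤ 2 * sSup ((fun x => ‖f x‖ ^ 2) '' Set.Icc (0 : ℝ) 1) := by
    rw [show ((fun x => ‖f x‖ ^ 2) '' Set.Icc (0 : ℝ) 1) = g '' Set.Icc (0:ℝ) 1 from rfl, hMsup]
    have e0 : ‖f 0‖ ^ 2 = g 0 := rfl
    have e1 : ‖f 1‖ ^ 2 = g 1 := rfl
    rw [e0, e1]; linarith
  have part2 : 2 * sSup ((fun x => ‖f x‖ ^ 2) '' Set.Icc (0 : ℝ) 1) ≤ 4 * (A + B) := by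
    rw [show ((fun x => ‖f x‖ ^ 2) '' Set.Icc (0 : ℝ) 1) = g '' Set.Icc (0:ℝ) 1 from rfl, hMsup]
    linarith
  refine ⟨part1, part2, ?_, ?_⟩
  · have h2M : ‖f 0‖ ^ 2 + ‖f 1‖ ^ 2 ≤ 2 * ‖f x₀‖ ^ 2 := by
      rw [show ((fun x => ‖f x‖ ^ 2) '' Set.Icc (0 : ℝ) 1) = g '' Set.Icc (0:ℝ) 1 from rfl,
        hMsup] at part1
      exact part1
    have := Real.sqrt_le_sqrt h2M
    refine this.trans ?_
    rw [hSsup, Real.sqrt_mul (by norm_num : (0:ℝ) ≤ 2), Real.sqrt_sq (norm_nonneg _)]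
  · rw [hSsup]
    have hM4 : 2 * ‖f x₀‖ ^ 2 ≤ 4 * (A + B) := by
      rw [show ((fun x => ‖f x‖ ^ 2) '' Set.Icc (0 : ℝ) 1) = g '' Set.Icc (0:ℝ) 1 from rfl,
        hMsup] at part2
      exact part2
    have h1 : Real.sqrt 2 * ‖f x₀‖ = Real.sqrt (2 * ‖f x₀‖ ^ 2) := by
      rw [Real.sqrt_mul (by norm_num : (0:ℝ) ≤ 2), Real.sqrt_sq (norm_nonneg _)]
    have h2 : Real.sqrt (4 * (A + B)) = 2 * Real.sqrt (A + B) := by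
      rw [Real.sqrt_mul (by norm_num : (0:ℝ) ≤ 4), show (4:ℝ) = 2 ^ 2 by norm_num,
        Real.sqrt_sq (by norm_num : (0:ℝ) ≤ 2)]
    rw [h1, ← h2]
    exact Real.sqrt_le_sqrt hM4
end

section
/- Let X be a real Hilbert space, let C ⊆ X be nonempty, and let P : X → X be the metric projection onto C, characterized by the variational inequality: for every x ∈ X, P(x) ∈ C and ⟪x − P(x), w − P(x)⟫ ≤ 0 for all w ∈ C. Let E : X → ℝ be a convex function which is differentiable with gradient g : X → X (i.e. for every x ∈ X, E has gradient g(x) at x, meaning the Fréchet derivative of E at x is the functional ⟪g(x), ·⟫). Then the following are equivalent: (i) E(P(y)) ≤ E(y) for all y ∈ X; (ii) ⟪g(P(y)), y − P(y)⟫ ≥ 0 for all y ∈ X. -/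
open Filter Topology

/-- If `f` has derivative `d` at `0` and the slopes from the right up to `1`
are at most `c`, then `d ≤ c`. -/
private lemma deriv_le_of_slope_le (f : ℝ → ℝ) (d c : ℝ) (hf : HasDerivAt f d 0)
    (h : ∀ t : ℝ, 0 < t → t ≤ 1 → (f t - f 0) / t ≤ c) : d ≤ c := by
  have ht : Tendsto (slope f 0) (𝓝[>] (0:ℝ)) (𝓝 d) :=
    (hasDerivAt_iff_tendsto_slope.mp hf).mono_left
      (nhdsWithin_mono _ (fun t ht => ne_of_gt ht))
  refine le_of_tendsto ht ?_
  filter_upwards [Ioc_mem_nhdsGT_of_mem (Set.left_mem_Ico.mpr one_pos)] with t ht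
  have := h t ht.1 ht.2
  simpa [slope_def_field, div_eq_inv_mul] using this

private lemma le_deriv_of_le_slope (f : ℝ → ℝ) (d c : ℝ) (hf : HasDerivAt f d 0)
    (h : ∀ t : ℝ, 0 < t → t ≤ 1 → c ≤ (f t - f 0) / t) : c ≤ d := by
  have := deriv_le_of_slope_le (fun t => -f t) (-d) (-c) hf.neg ?_
  · linarith
  · intro t ht ht1
    have h2 := h t ht ht1
    show (-f t - -f 0) / t ≤ -c
    rw [div_le_iff₀ ht]
    rw [le_div_iff₀ ht] at h2
    nlinarith

/-- For the metric projection `P` onto a nonempty set `C` in a real Hilbert space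
(characterized by the variational inequality) and a convex differentiable function
`E` with gradient `g`, the invariance condition `E (P y) ≤ E y` for all `y` is
equivalent to the gradient condition `⟪g (P y), y - P y⟫ ≥ 0` for all `y`. -/
theorem projection_energy_decrease_iff_gradient_condition
    {X : Type*} [NormedAddCommGroup X] [InnerProductSpace ℝ X] [CompleteSpace X]
    (C : Set X) (hC : C.Nonempty) (P : X → X)
    (hPmem : ∀ x : X, P x ∈ C)
    (hPvar : ∀ x : X, ∀ w ∈ C, (inner ℝ (x - P x) (w - P x) : ℝ) ≤ 0)
    (E : X → ℝ) (g : X → X)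
    (hconv : ConvexOn ℝ Set.univ E)
    (hgrad : ∀ x : X, HasGradientAt E (g x) x) :
    (∀ y : X, E (P y) ≤ E y) ↔ (∀ y : X, 0 ≤ (inner ℝ (g (P y)) (y - P y) : ℝ)) := by
  -- the derivative of t ↦ E (x + t • v) at 0 is ⟪g x, v⟫
  have key : ∀ x v : X,
      HasDerivAt (fun t : ℝ => E (x + t • v)) ((inner ℝ (g x) v : ℝ)) 0 := by
    intro x v
    have hline : HasDerivAt (fun t : ℝ => x + t • v) v 0 := by
      simpa using ((hasDerivAt_id (0:ℝ)).smul_const v).const_add x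
    have hF := (hgrad x).hasFDerivAt
    have hF' : HasFDerivAt E ((InnerProductSpace.toDual ℝ X) (g x)) (x + (0:ℝ) • v) := by
      simpa using hF
    have := hF'.comp_hasDerivAt (x := (0:ℝ)) hline
    simp at this; exact this
  constructor
  · -- decrease → gradient condition
    intro hdec y
    set x := P y with hx
    set v := y - x with hv
    -- P (x + t • v) = x for t ∈ [0,1]
    have hfix : ∀ t : ℝ, 0 ≤ t → t ≤ 1 → P (x + t • v) = x := by
      intro t ht0 ht1
      set z := x + t • v with hz
      set p := P z with hp
      have h1 : (inner ℝ (z - p) (x - p) : ℝ) ≤ 0 := hPvar z x (hPmem y)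
      have h2 : (inner ℝ (z - x) (p - x) : ℝ) ≤ 0 := by
        have hzx : z - x = t • v := by simp [hz]
        have : (inner ℝ (y - x) (p - x) : ℝ) ≤ 0 := hPvar y p (hPmem z)
        rw [hzx, real_inner_smul_left]
        exact mul_nonpos_of_nonneg_of_nonpos ht0 (by simpa [hv] using this)
      have hsum : (inner ℝ (x - p) (x - p) : ℝ)
          = inner ℝ (z - p) (x - p) + inner ℝ (z - x) (p - x) := by
        simp only [inner_sub_left, inner_sub_right]
        ring
      have hle : (inner ℝ (x - p) (x - p) : ℝ) ≤ 0 := by linarith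
      have : x - p = 0 := by
        have := le_antisymm hle (real_inner_self_nonneg)
        exact inner_self_eq_zero.mp this
      have := sub_eq_zero.mp this
      simpa [hp] using this.symm
    refine le_deriv_of_le_slope _ _ _ (key x v) ?_
    intro t ht0 ht1
    have hE : E x ≤ E (x + t • v) := by
      have := hdec (x + t • v)
      rwa [hfix t ht0.le ht1] at this
    have hnum : 0 ≤ E (x + t • v) - E (x + (0:ℝ) • v) := by simpa using hE
    positivity
  · -- gradient condition → decrease
    intro hg y
    set x := P y with hx
    set v := y - x with hv
    have hder := key x v
    have hle : (inner ℝ (g x) v : ℝ) ≤ E y - E x := by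
      refine deriv_le_of_slope_le _ _ _ hder ?_
      intro t ht0 ht1
      have hconvex : E (x + t • v) ≤ (1 - t) * E x + t * E y := by
        have h := hconv.2 (Set.mem_univ x) (Set.mem_univ y)
          (by linarith : (0:ℝ) ≤ 1 - t) ht0.le (by ring)
        have hpt : (1 - t) • x + t • y = x + t • v := by
          simp [hv]; module
        rw [hpt] at h
        simpa [smul_eq_mul] using h
      rw [div_le_iff₀ ht0]
      have : E (x + (0:ℝ) • v) = E x := by simp
      rw [this]
      nlinarith [hconvex]
    have := hg y
    linarith [hle, this]
end

section
/- Let V be a reflexive real Banach space, X a real normed vector space, and j : V → X an injective continuous linear map (a continuous embedding of V into X). Let T > 0, let u : ℝ → X be continuous on [0,T], and let K ≥ 0. Suppose there is a Lebesgue-null set N ⊆ [0,T] such that for every t ∈ [0,T] \ N there exists v ∈ V with j(v) = u(t) and ‖v‖_V ≤ K. Then for every t ∈ [0,T] there exists v ∈ V with j(v) = u(t) and ‖v‖_V ≤ K; that is, the bound ‖u(t)‖_V ≤ K, valid almost everywhere, holds everywhere on [0,T]. -/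
open MeasureTheory

/-- Density step: near any `t ∈ [0,T]` we can find good points at distance `≤ min T ε`. -/
lemma exists_good_near {T : ℝ} (hT : 0 < T) {N : Set ℝ} (hNnull : volume N = 0)
    {t : ℝ} (ht : t ∈ Set.Icc 0 T) {ε : ℝ} (hε : 0 < ε) :
    ∃ s ∈ Set.Icc 0 T \ N, |s - t| ≤ min T ε := by
  set δ := min T ε with hδdef
  have hδ : 0 < δ := lt_min hT hε
  rcases le_or_gt δ t with h | h
  · -- use the interval [t - δ, t]
    have hsub : Set.Icc (t - δ) t ⊆ Set.Icc 0 T := fun x hx =>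
      ⟨le_trans (by linarith) hx.1, le_trans hx.2 ht.2⟩
    have hpos : (0 : ENNReal) < volume (Set.Icc (t - δ) t) := by
      rw [Real.volume_Icc]
      simp only [ENNReal.ofReal_pos]
      linarith
    have hne : (Set.Icc (t - δ) t \ N).Nonempty := by
      by_contra hcon
      rw [Set.not_nonempty_iff_eq_empty, Set.diff_eq_empty] at hcon
      exact absurd (measure_mono_null hcon hNnull) (ne_of_gt hpos)
    obtain ⟨s, hs⟩ := hne
    refine ⟨s, ⟨hsub hs.1, hs.2⟩, ?_⟩
    have h1 := hs.1.1; have h2 := hs.1.2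
    rw [abs_le]; constructor <;> linarith
  · -- use the interval [t, δ]
    have hsub : Set.Icc t δ ⊆ Set.Icc 0 T := fun x hx =>
      ⟨le_trans ht.1 hx.1, le_trans hx.2 (min_le_left _ _)⟩
    have hpos : (0 : ENNReal) < volume (Set.Icc t δ) := by
      rw [Real.volume_Icc]
      simp only [ENNReal.ofReal_pos]
      linarith
    have hne : (Set.Icc t δ \ N).Nonempty := by
      by_contra hcon
      rw [Set.not_nonempty_iff_eq_empty, Set.diff_eq_empty] at hcon
      exact absurd (measure_mono_null hcon hNnull) (ne_of_gt hpos)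
    obtain ⟨s, hs⟩ := hne
    refine ⟨s, ⟨hsub hs.1, hs.2⟩, ?_⟩
    have h1 := hs.1.1; have h2 := hs.1.2
    have ht0 := ht.1
    rw [abs_le]; constructor <;> linarith

/-- Let `V` be a reflexive real Banach space (reflexivity being expressed by the
surjectivity of the canonical inclusion of `V` into its double dual), `X` a real normed
space, and `j : V → X` an injective continuous linear map (a continuous embedding).
If `u : ℝ → X` is continuous on `[0, T]` and, outside a Lebesgue-null set `N ⊆ [0, T]`,
`u t` lies in (the image of) `V` with `V`-norm at most `K`, then this holds for
*every* `t ∈ [0, T]`. -/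
theorem ae_bound_everywhere_of_reflexive
    {V X : Type*} [NormedAddCommGroup V] [NormedSpace ℝ V] [CompleteSpace V]
    [NormedAddCommGroup X] [NormedSpace ℝ X]
    (hrefl : Function.Surjective (NormedSpace.inclusionInDoubleDual ℝ V))
    (j : V →L[ℝ] X) (hj : Function.Injective j)
    (T : ℝ) (hT : 0 < T) (u : ℝ → X) (hu : ContinuousOn u (Set.Icc 0 T))
    (K : ℝ) (hK : 0 ≤ K)
    (N : Set ℝ) (hN : N ⊆ Set.Icc 0 T) (hNnull : volume N = 0)
    (hae : ∀ t ∈ Set.Icc 0 T \ N, ∃ v : V, j v = u t ∧ ‖v‖ ≤ K) :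
    ∀ t ∈ Set.Icc 0 T, ∃ v : V, j v = u t ∧ ‖v‖ ≤ K := by
  intro t ht
  -- choose a sequence of good points converging to `t`
  have hseq : ∀ n : ℕ, ∃ s ∈ Set.Icc 0 T \ N, |s - t| ≤ min T (1 / (n + 1)) := fun n =>
    exists_good_near hT hNnull ht (by positivity)
  choose s hsmem hsdist using hseq
  have hs_tendsto : Filter.Tendsto s Filter.atTop (nhds t) := by
    have h0 : Filter.Tendsto (fun n : ℕ => 1 / ((n : ℝ) + 1)) Filter.atTop (nhds 0) :=
      tendsto_one_div_add_atTop_nhds_zero_nat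
    rw [← tendsto_sub_nhds_zero_iff]
    apply squeeze_zero_norm (fun n => le_trans (hsdist n) (min_le_right _ _)) h0
  -- choose bounded preimages in V
  choose v hv hvK using fun n => hae (s n) (hsmem n)
  -- push into the weak dual of the dual
  set J := NormedSpace.inclusionInDoubleDual ℝ V with hJ
  set φ : ℕ → WeakDual ℝ (StrongDual ℝ V) :=
    fun n => StrongDual.toWeakDual (J (v n)) with hφ
  have hmem : ∀ n, φ n ∈ WeakDual.toStrongDual ⁻¹' Metric.closedBall 0 K := by
    intro n
    simp only [Set.mem_preimage, Metric.mem_closedBall, dist_zero_right]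
    refine (dist_zero_right (WeakDual.toStrongDual (φ n) : StrongDual ℝ (StrongDual ℝ V))).trans_le ?_
    calc ‖WeakDual.toStrongDual (φ n)‖ = ‖J (v n)‖ := rfl
      _ = ‖v n‖ := (NormedSpace.inclusionInDoubleDualLi ℝ (E := V)).norm_map (v n)
      _ ≤ K := hvK n
  have hle : Filter.map φ Filter.atTop ≤
      Filter.principal (WeakDual.toStrongDual ⁻¹' Metric.closedBall 0 K) := by
    rw [Filter.le_principal_iff, Filter.mem_map]
    exact Filter.univ_mem' hmem
  obtain ⟨ψ, hψmem, hψcl⟩ :=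
    (WeakDual.isCompact_closedBall (0 : StrongDual ℝ (StrongDual ℝ V)) K).exists_clusterPt hle
  -- reflexivity: ψ comes from some w : V
  obtain ⟨w, hw⟩ := hrefl (WeakDual.toStrongDual ψ)
  have hwK : ‖w‖ ≤ K := by
    have := (NormedSpace.inclusionInDoubleDualLi ℝ (E := V)).norm_map w
    rw [show (NormedSpace.inclusionInDoubleDualLi ℝ (E := V)) w = J w from rfl, hw] at this
    rw [← this]
    simpa [dist_zero_right] using hψmem
  refine ⟨w, ?_, hwK⟩
  -- show j w = u t by testing against all functionals on X
  rw [NormedSpace.eq_iff_forall_dual_eq ℝ]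
  intro g
  set f : StrongDual ℝ V := g.comp j with hf
  -- evaluation at f is weak-* continuous
  have heval : Continuous fun x : WeakDual ℝ (StrongDual ℝ V) => x f :=
    WeakDual.eval_continuous f
  have hcl2 : ClusterPt (ψ f) (Filter.map (fun n => φ n f) Filter.atTop) := by
    have := hψcl.map heval.continuousAt
      (Filter.tendsto_map (f := fun x : WeakDual ℝ (StrongDual ℝ V) => x f))
    rwa [Filter.map_map] at this
  -- the sequence (φ n) f = g (u (s n)) converges to g (u t)
  have hconv : Filter.Tendsto (fun n => φ n f) Filter.atTop (nhds (g (u t))) := by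
    have h1 : ∀ n, φ n f = g (u (s n)) := by
      intro n
      simp only [hφ, hf]
      rw [StrongDual.coe_toWeakDual]
      show (g.comp j) (v n) = g (u (s n))
      simp [hv n]
    simp only [h1]
    have hus : Filter.Tendsto (fun n => u (s n)) Filter.atTop (nhds (u t)) := by
      apply (hu t ht).tendsto.comp
      apply tendsto_nhdsWithin_of_tendsto_nhds_of_eventually_within _ hs_tendsto
      exact Filter.Eventually.of_forall fun n => (hsmem n).1
    exact (g.continuous.tendsto _).comp hus
  -- cluster point of a convergent sequence is its limit
  have : ψ f = g (u t) := by
    apply eq_of_nhds_neBot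
    exact (hcl2.mono hconv).neBot
  rw [← this]
  show g (j w) = ψ f
  have : (WeakDual.toStrongDual ψ) f = ψ f := rfl
  rw [← this, ← hw]
  rfl
end
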